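/- Let A = (a_1,…,a_K) and B = (b_1,…,b_K) be two lists of K distinct items from E such that a_i = b_j only if i = j, and let (w(e))_{e∈E} be mutually independent Bernoulli random variables with means w̄(e) ∈ [0,1]. Assume w̄(a_k) ≤ w̄(b_k) for all k, and let w̄_max = max_{e∈E} w̄(e) and α = (1 − w̄_max)^{K−1}. Then, writing Δ_k = w̄(b_k) − w̄(a_k) and P_k = P(w(a_1) = ⋯ = w(a_{k−1}) = 0), we have α · Σ_{k=1}^K Δ_k P_k ≤ E[∏_{k=1}^K (1 − w(a_k)) − ∏_{k=1}^K (1 − w(b_k))] ≤ Σ_{k=1}^K Δ_k P_k. -/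

import Mathlib

open MeasureTheory ProbabilityTheory

section Aux

variable {E : Type*} [Fintype E] {Ω : Type*} [MeasurableSpace Ω] (μ : Measure Ω)
  [IsProbabilityMeasure μ] (w : E → Ω → ℝ) (wbar : E → ℝ)

omit [Fintype E] in
lemma aux_prod_integral (hmeas : ∀ e, Measurable (w e))
    (hbin : ∀ e ω, w e ω = 0 ∨ w e ω = 1)
    (hmean : ∀ e, (∫ ω, w e ω ∂μ) = wbar e)
    (hindep : iIndepFun (m := fun _ : E => Real.measurableSpace) w μ)
    (S : Finset E) :
    (∫ ω, ∏ e ∈ S, (1 - w e ω) ∂μ) = ∏ e ∈ S, (1 - wbar e) := by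
  classical
  have hgmeas : ∀ e, Measurable (fun ω => 1 - w e ω) :=
    fun e => measurable_const.sub (hmeas e)
  have hgindep : iIndepFun (m := fun _ : E => Real.measurableSpace)
      (fun e ω => 1 - w e ω) μ :=
    hindep.comp (fun _ x => 1 - x) (fun _ => measurable_const.sub measurable_id)
  induction S using Finset.induction_on with
  | empty => simp
  | @insert x S hx ih =>
    have hPS : (fun ω => ∏ e ∈ S, (1 - w e ω)) = ∏ e ∈ S, (fun ω => 1 - w e ω) := by
      funext ω; simp [Finset.prod_apply]
    have hIndep : IndepFun (fun ω => 1 - w x ω) (fun ω => ∏ e ∈ S, (1 - w e ω)) μ := by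
      rw [hPS]
      exact (hgindep.indepFun_finsetProd_of_notMem hgmeas hx).symm
    have hXm : AEStronglyMeasurable (fun ω => 1 - w x ω) μ :=
      (hgmeas x).aestronglyMeasurable
    have hYm : AEStronglyMeasurable (fun ω => ∏ e ∈ S, (1 - w e ω)) μ :=
      (Finset.measurable_prod S fun e _ => hgmeas e).aestronglyMeasurable
    have key : (∫ ω, (1 - w x ω) * (∏ e ∈ S, (1 - w e ω)) ∂μ)
        = (∫ ω, (1 - w x ω) ∂μ) * (∫ ω, (∏ e ∈ S, (1 - w e ω)) ∂μ) :=
      hIndep.integral_fun_mul_eq_mul_integral hXm hYm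
    have hwint : Integrable (w x) μ := by
      refine (integrable_const (1:ℝ)).mono' (hmeas x).aestronglyMeasurable
        (Filter.Eventually.of_forall fun ω => ?_)
      rcases hbin x ω with h | h <;> simp [h]
    have h1 : (∫ ω, (1 - w x ω) ∂μ) = 1 - wbar x := by
      rw [integral_sub (integrable_const 1) hwint, integral_const, hmean]
      simp
    simp_rw [Finset.prod_insert hx]
    rw [key, h1, ih]

omit [Fintype E] in
lemma aux_prod_integral' {K : ℕ} (hmeas : ∀ e, Measurable (w e))
    (hbin : ∀ e ω, w e ω = 0 ∨ w e ω = 1)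
    (hmean : ∀ e, (∫ ω, w e ω ∂μ) = wbar e)
    (hindep : iIndepFun (m := fun _ : E => Real.measurableSpace) w μ)
    (c : Fin K → E) (s : Finset (Fin K))
    (hc : ∀ i ∈ s, ∀ j ∈ s, c i = c j → i = j) :
    (∫ ω, ∏ i ∈ s, (1 - w (c i) ω) ∂μ) = ∏ i ∈ s, (1 - wbar (c i)) := by
  classical
  have h1 : ∀ ω, ∏ i ∈ s, (1 - w (c i) ω) = ∏ e ∈ s.image c, (1 - w e ω) := by
    intro ω; rw [Finset.prod_image hc]
  have h2 : ∏ i ∈ s, (1 - wbar (c i)) = ∏ e ∈ s.image c, (1 - wbar e) := by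
    rw [Finset.prod_image hc]
  simp_rw [h1, h2]
  exact aux_prod_integral μ w wbar hmeas hbin hmean hindep _

end Aux

/-- under the assumptions of Statement 5 together with `w̄(a_k) ≤ w̄(b_k)`
for all `k`, with `w̄_max = max_{e ∈ E} w̄(e)`, `α = (1 − w̄_max)^{K−1}`,
`Δ_k = w̄(b_k) − w̄(a_k)` and `P_k = P(w(a_1) = ⋯ = w(a_{k−1}) = 0)`, it holds that
`α · Σ_k Δ_k P_k ≤ E[∏_k (1 − w(a_k)) − ∏_k (1 − w(b_k))] ≤ Σ_k Δ_k P_k`. -/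
theorem regret_decomposition_two_sided_bound {E : Type*} [Fintype E] [Nonempty E]
    {Ω : Type*} [MeasurableSpace Ω] (μ : Measure Ω) [IsProbabilityMeasure μ]
    (K : ℕ) (a b : Fin K → E)
    (ha : Function.Injective a) (hb : Function.Injective b)
    (hab : ∀ i j : Fin K, a i = b j → i = j)
    (w : E → Ω → ℝ) (wbar : E → ℝ)
    (hmeas : ∀ e, Measurable (w e))
    (hbin : ∀ e ω, w e ω = 0 ∨ w e ω = 1)
    (hmean : ∀ e, (∫ ω, w e ω ∂μ) = wbar e)
    (hw01 : ∀ e, wbar e ∈ Set.Icc (0 : ℝ) 1)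
    (hle : ∀ k : Fin K, wbar (a k) ≤ wbar (b k))
    (hindep : iIndepFun (m := fun _ : E => Real.measurableSpace) w μ)
    (wmax : ℝ) (hwmax : IsGreatest (Set.range wbar) wmax) :
    (1 - wmax) ^ (K - 1) *
        (∑ k : Fin K, (wbar (b k) - wbar (a k)) *
          (μ {ω | ∀ i : Fin K, i < k → w (a i) ω = 0}).toReal) ≤
      (∫ ω, ((∏ k : Fin K, (1 - w (a k) ω)) - ∏ k : Fin K, (1 - w (b k) ω)) ∂μ) ∧
    (∫ ω, ((∏ k : Fin K, (1 - w (a k) ω)) - ∏ k : Fin K, (1 - w (b k) ω)) ∂μ) ≤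
      ∑ k : Fin K, (wbar (b k) - wbar (a k)) *
        (μ {ω | ∀ i : Fin K, i < k → w (a i) ω = 0}).toReal := by
  classical
  set P : Fin K → ℝ :=
    fun k => ∏ i ∈ Finset.univ.filter (fun i => i < k), (1 - wbar (a i)) with hPdef
  set Q : Fin K → ℝ :=
    fun k => ∏ i ∈ Finset.univ.filter (fun i => k < i), (1 - wbar (b i)) with hQdef
  have hwmaxle : ∀ e, wbar e ≤ wmax := fun e => hwmax.2 ⟨e, rfl⟩
  have hwmax1 : wmax ≤ 1 := by
    obtain ⟨e, he⟩ := hwmax.1; rw [← he]; exact (hw01 e).2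
  have hwmax0 : 0 ≤ wmax := by
    have e := Classical.arbitrary E
    exact le_trans (hw01 e).1 (hwmaxle e)
  have h1wmax : (0:ℝ) ≤ 1 - wmax := by linarith
  -- measure equals product
  have hμP : ∀ k : Fin K,
      (μ {ω | ∀ i : Fin K, i < k → w (a i) ω = 0}).toReal = P k := by
    intro k
    set s : Set Ω := {ω | ∀ i : Fin K, i < k → w (a i) ω = 0} with hsdef
    have hs : MeasurableSet s := by
      have : s = ⋂ i : Fin K, ⋂ (_ : i < k), (w (a i)) ⁻¹' {0} := by
        ext ω; simp [hsdef, Set.mem_iInter]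
      rw [this]
      exact MeasurableSet.iInter fun i => MeasurableSet.iInter fun _ =>
        (hmeas _) (measurableSet_singleton 0)
    have hind : ∀ ω, ∏ i ∈ Finset.univ.filter (fun i => i < k), (1 - w (a i) ω)
        = s.indicator (fun _ => (1:ℝ)) ω := by
      intro ω
      by_cases hω : ω ∈ s
      · rw [Set.indicator_of_mem hω]
        refine Finset.prod_eq_one fun i hi => ?_
        rw [hω i (Finset.mem_filter.mp hi).2]; ring
      · rw [Set.indicator_of_notMem hω]
        have : ¬ ∀ i : Fin K, i < k → w (a i) ω = 0 := hω
        push_neg at this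
        obtain ⟨i, hik, hne⟩ := this
        refine Finset.prod_eq_zero (Finset.mem_filter.mpr ⟨Finset.mem_univ _, hik⟩) ?_
        rcases hbin (a i) ω with h | h
        · exact absurd h hne
        · rw [h]; ring
    have h1 : (μ s).toReal = ∫ ω, s.indicator (fun _ => (1:ℝ)) ω ∂μ := by
      rw [integral_indicator_const (1:ℝ) hs, smul_eq_mul, mul_one, Measure.real]
    rw [h1]
    have h2 : (∫ ω, s.indicator (fun _ => (1:ℝ)) ω ∂μ)
        = ∫ ω, ∏ i ∈ Finset.univ.filter (fun i => i < k), (1 - w (a i) ω) ∂μ := by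
      refine integral_congr_ae (Filter.Eventually.of_forall fun ω => ?_)
      exact (hind ω).symm
    rw [h2, hPdef]
    exact aux_prod_integral' μ w wbar hmeas hbin hmean hindep a _
      (fun i _ j _ h => ha h)
  -- the interpolating product
  set G : ℕ → ℝ :=
    fun m => ∏ i : Fin K, (1 - wbar (if (i:ℕ) < m then a i else b i)) with hGdef
  have hF : ∀ m : ℕ, (∫ ω, ∏ i : Fin K,
      (1 - w (if (i:ℕ) < m then a i else b i) ω) ∂μ) = G m := by
    intro m
    refine aux_prod_integral' μ w wbar hmeas hbin hmean hindep
      (fun i => if (i:ℕ) < m then a i else b i) Finset.univ ?_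
    intro i _ j _ hij
    by_cases hi : (i:ℕ) < m <;> by_cases hj : (j:ℕ) < m <;>
      simp only [hi, hj, if_pos, if_neg, if_true, if_false] at hij
    · exact ha hij
    · exact hab i j hij
    · exact (hab j i hij.symm).symm
    · exact hb hij
  -- integrability
  have hIprod : ∀ c : Fin K → E,
      Integrable (fun ω => ∏ k : Fin K, (1 - w (c k) ω)) μ := by
    intro c
    refine (integrable_const (1:ℝ)).mono'
      (Finset.measurable_prod Finset.univ fun i _ =>
        measurable_const.sub (hmeas (c i))).aestronglyMeasurable
      (Filter.Eventually.of_forall fun ω => ?_)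
    rw [Real.norm_eq_abs, abs_le]
    constructor
    · have h0 : (0:ℝ) ≤ ∏ k : Fin K, (1 - w (c k) ω) :=
        Finset.prod_nonneg fun i _ => by rcases hbin (c i) ω with h | h <;> simp [h]
      linarith
    · refine Finset.prod_le_one (fun i _ => ?_) (fun i _ => ?_)
      · rcases hbin (c i) ω with h | h <;> simp [h]
      · rcases hbin (c i) ω with h | h <;> simp [h]
  -- step identity for G
  have hstep : ∀ k : Fin K,
      G ((k:ℕ)+1) - G (k:ℕ) = (wbar (b k) - wbar (a k)) * (P k * Q k) := by
    intro k
    have hRsame : ∀ i ∈ Finset.univ.erase k,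
        (1 - wbar (if (i:ℕ) < (k:ℕ)+1 then a i else b i))
          = (1 - wbar (if (i:ℕ) < (k:ℕ) then a i else b i)) := by
      intro i hi
      have hik : i ≠ k := (Finset.mem_erase.mp hi).1
      have hne : (i:ℕ) ≠ (k:ℕ) := fun h => hik (Fin.ext h)
      by_cases hc : (i:ℕ) < (k:ℕ)
      · rw [if_pos hc, if_pos (by omega)]
      · rw [if_neg hc, if_neg (by omega)]
    have hGk1 : G ((k:ℕ)+1) = (1 - wbar (a k)) *
        ∏ i ∈ Finset.univ.erase k, (1 - wbar (if (i:ℕ) < (k:ℕ) then a i else b i)) := by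
      simp only [hGdef]
      rw [← Finset.mul_prod_erase Finset.univ _ (Finset.mem_univ k),
        if_pos (by omega : (k:ℕ) < (k:ℕ)+1)]
      rw [Finset.prod_congr rfl hRsame]
    have hGk : G (k:ℕ) = (1 - wbar (b k)) *
        ∏ i ∈ Finset.univ.erase k, (1 - wbar (if (i:ℕ) < (k:ℕ) then a i else b i)) := by
      simp only [hGdef]
      rw [← Finset.mul_prod_erase Finset.univ _ (Finset.mem_univ k),
        if_neg (by omega : ¬ (k:ℕ) < (k:ℕ))]
    have hR : (∏ i ∈ Finset.univ.erase k,
        (1 - wbar (if (i:ℕ) < (k:ℕ) then a i else b i))) = P k * Q k := by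
      rw [← Finset.prod_filter_mul_prod_filter_not (Finset.univ.erase k)
        (fun i : Fin K => (i:ℕ) < (k:ℕ))]
      congr 1
      · rw [show (Finset.univ.erase k).filter (fun i : Fin K => (i:ℕ) < (k:ℕ))
            = Finset.univ.filter (fun i : Fin K => i < k) from by
          ext i
          simp only [Finset.mem_filter, Finset.mem_erase, Finset.mem_univ, true_and,
            and_true, Fin.lt_def, Fin.ext_iff]
          omega]
        refine Finset.prod_congr rfl fun i hi => ?_
        rw [if_pos (Fin.lt_def.mp (Finset.mem_filter.mp hi).2)]
      · rw [show (Finset.univ.erase k).filter (fun i : Fin K => ¬ (i:ℕ) < (k:ℕ))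
            = Finset.univ.filter (fun i : Fin K => k < i) from by
          ext i
          simp only [Finset.mem_filter, Finset.mem_erase, Finset.mem_univ, true_and,
            and_true, Fin.lt_def, Fin.ext_iff]
          omega]
        refine Finset.prod_congr rfl fun i hi => ?_
        have : (k:ℕ) < (i:ℕ) := Fin.lt_def.mp (Finset.mem_filter.mp hi).2
        rw [if_neg (by omega : ¬ (i:ℕ) < (k:ℕ))]
    rw [hGk1, hGk, hR]; ring
  -- main integral identity
  have hmain : (∫ ω, ((∏ k : Fin K, (1 - w (a k) ω))
        - ∏ k : Fin K, (1 - w (b k) ω)) ∂μ)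
      = ∑ k : Fin K, (wbar (b k) - wbar (a k)) * (P k * Q k) := by
    rw [integral_sub (hIprod a) (hIprod b)]
    have hKa : (∫ ω, ∏ k : Fin K, (1 - w (a k) ω) ∂μ) = G K := by
      rw [← hF K]
      refine integral_congr_ae (Filter.Eventually.of_forall fun ω => ?_)
      exact Finset.prod_congr rfl fun i _ => by rw [if_pos i.isLt]
    have hKb : (∫ ω, ∏ k : Fin K, (1 - w (b k) ω) ∂μ) = G 0 := by
      rw [← hF 0]
      refine integral_congr_ae (Filter.Eventually.of_forall fun ω => ?_)
      exact Finset.prod_congr rfl fun i _ => by rw [if_neg (by omega)]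
    rw [hKa, hKb, ← Finset.sum_range_sub G K, Finset.sum_range fun n => G (n+1) - G n]
    exact Finset.sum_congr rfl fun k _ => hstep k
  -- bounds on P and Q
  have hP0 : ∀ k, 0 ≤ P k := fun k =>
    Finset.prod_nonneg fun i _ => by have := (hw01 (a i)).2; linarith
  have hΔ0 : ∀ k : Fin K, 0 ≤ wbar (b k) - wbar (a k) := fun k => by
    have := hle k; linarith
  have hQ1 : ∀ k, Q k ≤ 1 := fun k =>
    Finset.prod_le_one (fun i _ => by have := (hw01 (b i)).2; linarith)
      (fun i _ => by have := (hw01 (b i)).1; linarith)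
  have hQlb : ∀ k, (1 - wmax) ^ (K - 1) ≤ Q k := by
    intro k
    have hcard : (Finset.univ.filter (fun i => k < i)).card ≤ K - 1 := by
      have hsub : Finset.univ.filter (fun i => k < i) ⊆ Finset.univ.erase k := by
        intro i hi
        exact Finset.mem_erase.mpr ⟨ne_of_gt (Finset.mem_filter.mp hi).2, Finset.mem_univ _⟩
      calc (Finset.univ.filter (fun i => k < i)).card
          ≤ (Finset.univ.erase k).card := Finset.card_le_card hsub
        _ = K - 1 := by
            rw [Finset.card_erase_of_mem (Finset.mem_univ k), Finset.card_univ,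
              Fintype.card_fin]
    calc (1 - wmax) ^ (K - 1)
        ≤ (1 - wmax) ^ (Finset.univ.filter (fun i => k < i)).card :=
          pow_le_pow_of_le_one h1wmax (by linarith) hcard
      _ = ∏ i ∈ Finset.univ.filter (fun i => k < i), (1 - wmax) :=
          (Finset.prod_const _).symm
      _ ≤ Q k := Finset.prod_le_prod (fun i _ => h1wmax)
          (fun i _ => by have := hwmaxle (b i); linarith)
  simp only [hμP, hmain]
  constructor
  · rw [Finset.mul_sum]
    refine Finset.sum_le_sum fun k _ => ?_
    calc (1 - wmax) ^ (K - 1) * ((wbar (b k) - wbar (a k)) * P k)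
        = ((wbar (b k) - wbar (a k)) * P k) * ((1 - wmax) ^ (K - 1)) := by ring
      _ ≤ ((wbar (b k) - wbar (a k)) * P k) * Q k :=
          mul_le_mul_of_nonneg_left (hQlb k) (mul_nonneg (hΔ0 k) (hP0 k))
      _ = (wbar (b k) - wbar (a k)) * (P k * Q k) := by ring
  · refine Finset.sum_le_sum fun k _ => ?_
    calc (wbar (b k) - wbar (a k)) * (P k * Q k)
        = ((wbar (b k) - wbar (a k)) * P k) * Q k := by ring
      _ ≤ ((wbar (b k) - wbar (a k)) * P k) * 1 :=
          mul_le_mul_of_nonneg_left (hQ1 k) (mul_nonneg (hΔ0 k) (hP0 k))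
      _ = (wbar (b k) - wbar (a k)) * P k := by ring
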